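/- arXiv:1609.03311 — 2 statements merged into one kernel-verified Lean document; each statement's English description precedes it below -/
import Mathlib

section
/- Let g be a nilpotent Lie algebra with lower central series g¹ = g, g^{k+1} = [g, g^k], and let ⟨·,·⟩ be an ad-invariant nondegenerate symmetric bilinear form on g. Then the subspace i(g) := Σ_{k≥0} (g^{k+1} ∩ (g^{k+1})^⊥) is an isotropic ideal of g. -/
/-- The canonical isotropic ideal `i(g) = Σ_k (g^{k+1} ∩ (g^{k+1})^⊥)` of a nilpotent
metric Lie algebra, as a submodule.  (Here `g^{k+1}` is the `k`-th term of the lower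
central series, `g¹ = g`.) -/
noncomputable def canonicalIsotropicIdeal (g : Type*) [LieRing g] [LieAlgebra ℝ g]
    (B : LinearMap.BilinForm ℝ g) : Submodule ℝ g :=
  ⨆ k : ℕ,
    ((LieModule.lowerCentralSeries ℝ g g k : Submodule ℝ g) ⊓
      B.orthogonal (LieModule.lowerCentralSeries ℝ g g k : Submodule ℝ g))

/-- For a nilpotent Lie algebra `g` with ad-invariant nondegenerate
symmetric bilinear form `B`, the subspace `i(g) = Σ_k (g^{k+1} ∩ (g^{k+1})^⊥)` is an
isotropic ideal of `g`. -/
theorem canonicalIsotropicIdeal_isotropic_ideal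
    {g : Type*} [LieRing g] [LieAlgebra ℝ g] [LieRing.IsNilpotent g]
    (B : LinearMap.BilinForm ℝ g)
    (hBnd : B.Nondegenerate) (hBsymm : B.IsSymm)
    (hBinv : ∀ x y z : g, B ⁅x, y⁆ z = B x ⁅y, z⁆) :
    (∀ x ∈ canonicalIsotropicIdeal g B, ∀ y ∈ canonicalIsotropicIdeal g B, B x y = 0) ∧
    (∀ x : g, ∀ y ∈ canonicalIsotropicIdeal g B, ⁅x, y⁆ ∈ canonicalIsotropicIdeal g B) := by
  set C : ℕ → LieIdeal ℝ g := LieModule.lowerCentralSeries ℝ g g with hC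
  set I : ℕ → Submodule ℝ g := fun k => ((C k : Submodule ℝ g) ⊓ B.orthogonal (C k : Submodule ℝ g))
    with hI
  have hmono : ∀ {j k : ℕ}, j ≤ k → (C k : Submodule ℝ g) ≤ (C j : Submodule ℝ g) := by
    intro j k hjk
    exact LieModule.antitone_lowerCentralSeries ℝ g g hjk
  -- pairwise orthogonality of the pieces
  have hpair : ∀ j k : ℕ, ∀ x ∈ I j, ∀ y ∈ I k, B x y = 0 := by
    intro j k x hx y hy
    rcases le_total j k with h | h
    · have hyCj : y ∈ (C j : Submodule ℝ g) := hmono h hy.1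
      have := hx.2 y hyCj
      calc B x y = B y x := hBsymm.eq x y
        _ = 0 := this
    · have hxCk : x ∈ (C k : Submodule ℝ g) := hmono h hx.1
      exact hy.2 x hxCk
  -- each piece maps into itself under bracketing
  have hlie : ∀ (x : g) (k : ℕ), ∀ y ∈ I k, ⁅x, y⁆ ∈ I k := by
    intro x k y hy
    constructor
    · -- C k is a Lie ideal
      exact (C k).lie_mem hy.1
    · intro n hn
      have h1 : ⁅n, x⁆ ∈ (C k : Submodule ℝ g) := by
        rw [← lie_skew]
        exact neg_mem ((C k).lie_mem hn)
      have h2 : B ⁅n, x⁆ y = 0 := hy.2 ⁅n, x⁆ h1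
      have h3 : B ⁅n, x⁆ y = B n ⁅x, y⁆ := hBinv n x y
      simpa [LinearMap.BilinForm.IsOrtho, ← h3] using h2
  constructor
  · intro x hx y hy
    refine Submodule.iSup_induction (p := fun j => I j)
      (motive := fun x => ∀ y ∈ (⨆ k, I k : Submodule ℝ g), B x y = 0) hx ?_ ?_ ?_ y hy
    · intro j x hxj y hy
      refine Submodule.iSup_induction (p := fun k => I k)
        (motive := fun y => B x y = 0) hy ?_ ?_ ?_
      · intro k y hyk; exact hpair j k x hxj y hyk
      · simp
      · intro a b ha hb; rw [map_add, ha, hb, add_zero]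
    · intro y hy; simp
    · intro a b ha hb y hy
      rw [map_add, LinearMap.add_apply, ha y hy, hb y hy, add_zero]
  · intro x y hy
    refine Submodule.iSup_induction (p := fun k => I k)
      (motive := fun y => ⁅x, y⁆ ∈ (⨆ k, I k : Submodule ℝ g)) hy ?_ ?_ ?_
    · intro k y hyk
      exact Submodule.mem_iSup_of_mem k (hlie x k y hyk)
    · simp
    · intro a b ha hb
      rw [lie_add]; exact add_mem ha hb
end

section
/- Let D_l be a bijective derivation of l = ℝ² (abelian) and (a, D_a) a finite-dimensional metric vector space with bijective skewsymmetric map D_a, viewed as a trivial (l,D_l)-module. Suppose α ∈ C²(l,a) satisfies D_s°α = 0 where D_s° is built from the semisimple parts of D_l and D_a. Then either α = 0 or the image α(l,l) is a one-dimensional isotropic subspace of a; in particular α(l,l) is degenerate whenever α ≠ 0. -/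
/-- Let `D_l` be a bijective endomorphism (= derivation) of the
abelian Lie algebra `l = ℝ²` and `(a, B, D_a)` a finite-dimensional metric vector
space with a bijective skewsymmetric map `D_a`, viewed as a trivial module.  If the
alternating bilinear map `α ∈ C²(l, a)` satisfies `D_s°α = 0`, where `D_s°` is built
from the semisimple parts `D_{l,s}`, `D_{a,s}` of the Jordan decompositions, then
either `α = 0` or the image `α(l,l)` is a one-dimensional isotropic subspace of `a`;
in particular `α(l,l)` is degenerate whenever `α ≠ 0`. -/
theorem dim_two_no_balanced_alpha
    {l a : Type*} [AddCommGroup l] [Module ℝ l] [FiniteDimensional ℝ l]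
    [AddCommGroup a] [Module ℝ a] [FiniteDimensional ℝ a]
    (hl2 : Module.finrank ℝ l = 2)
    (B : LinearMap.BilinForm ℝ a) (hBnd : B.Nondegenerate) (hBsymm : B.IsSymm)
    (Dl Dls : Module.End ℝ l) (Da Das : Module.End ℝ a)
    (hDlbij : Function.Bijective Dl) (hDabij : Function.Bijective Da)
    (hDaskew : ∀ u v : a, B (Da u) v = - B u (Da v))
    (hDlss : Dls.IsSemisimple) (hDlnil : IsNilpotent (Dl - Dls)) (hDlc : Commute Dl Dls)
    (hDass : Das.IsSemisimple) (hDanil : IsNilpotent (Da - Das)) (hDac : Commute Da Das)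
    (α : l →ₗ[ℝ] l →ₗ[ℝ] a) (hαalt : ∀ x : l, α x x = 0)
    (hDs : ∀ x y : l, Das (α x y) - α (Dls x) y - α x (Dls y) = 0) :
    (α = 0 ∨
      (Module.finrank ℝ (Submodule.span ℝ {z : a | ∃ x y : l, α x y = z}) = 1 ∧
        ∀ u ∈ Submodule.span ℝ {z : a | ∃ x y : l, α x y = z},
          ∀ v ∈ Submodule.span ℝ {z : a | ∃ x y : l, α x y = z}, B u v = 0)) ∧
    (α ≠ 0 →
      ∃ u ∈ Submodule.span ℝ {z : a | ∃ x y : l, α x y = z}, u ≠ 0 ∧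
        ∀ v ∈ Submodule.span ℝ {z : a | ∃ x y : l, α x y = z}, B u v = 0) := by
  classical
  let b : Module.Basis (Fin 2) ℝ l := Module.finBasisOfFinrankEq ℝ l hl2
  set w : a := α (b 0) (b 1) with hw
  -- antisymmetry
  have hanti : ∀ x y : l, α y x = - α x y := by
    intro x y
    have h := hαalt (x + y)
    simp only [map_add, LinearMap.add_apply, hαalt] at h
    have h2 : α y x + α x y = 0 := by rw [← h]; abel
    exact eq_neg_of_add_eq_zero_left h2
  -- representation of α through w
  have hrep : ∀ x y : l, α x y = (b.repr x 0 * b.repr y 1 - b.repr x 1 * b.repr y 0) • w := by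
    intro x y
    conv_lhs => rw [← b.sum_repr x, ← b.sum_repr y]
    simp only [Fin.sum_univ_two, map_add, map_smul, LinearMap.add_apply, LinearMap.smul_apply,
      hαalt, hanti (b 0) (b 1), ← hw]
    module
  -- eigenvalue
  set t : ℝ := b.repr (Dls (b 0)) 0 + b.repr (Dls (b 1)) 1 with htdef
  have hDasw : Das w = t • w := by
    have h := hDs (b 0) (b 1)
    rw [hrep (Dls (b 0)) (b 1), hrep (b 0) (Dls (b 1))] at h
    simp only [Module.Basis.repr_self, Finsupp.single_eq_same, Finsupp.single_apply] at h
    norm_num at h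
    rw [sub_sub, sub_eq_zero] at h
    rw [h, htdef, add_smul]
  by_cases hα0 : α = 0
  · exact ⟨Or.inl hα0, fun h => absurd hα0 h⟩
  -- α ≠ 0 case
  have hwne : w ≠ 0 := by
    intro hw0
    apply hα0
    ext x y
    rw [LinearMap.zero_apply, LinearMap.zero_apply, hrep x y, hw0, smul_zero]
  set N : Module.End ℝ a := Da - Das with hN
  have hcomDasN : Commute Das N := (hDac.symm).sub_right (Commute.refl Das)
  have hcomDaN : Commute Da N := (Commute.refl Da).sub_right hDac
  obtain ⟨K, hK⟩ := hDanil
  have hDaeq : ∀ x : a, Da x = N x + Das x := by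
    intro x
    simp [hN, LinearMap.sub_apply, sub_add_cancel]
  -- t ≠ 0
  have htne : t ≠ 0 := by
    intro ht0
    apply hwne
    have hw0 : Das w = 0 := by rw [hDasw, ht0, zero_smul]
    have h1 : ∀ k : ℕ, Das ((N ^ k) w) = 0 := by
      intro k
      induction k with
      | zero => simpa using hw0
      | succ k ih =>
        have : (N ^ (k + 1)) w = N ((N ^ k) w) := by
          rw [pow_succ']; rfl
        rw [this]
        have hc : Das (N ((N ^ k) w)) = N (Das ((N ^ k) w)) := by
          have := congrArg (fun f : Module.End ℝ a => f ((N ^ k) w)) hcomDasN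
          simpa [Module.End.mul_apply] using this
        rw [hc, ih, map_zero]
    have h2 : ∀ k : ℕ, (Da ^ k) w = (N ^ k) w := by
      intro k
      induction k with
      | zero => rfl
      | succ k ih =>
        have hda : (Da ^ (k + 1)) w = Da ((Da ^ k) w) := by rw [pow_succ']; rfl
        have hnn : (N ^ (k + 1)) w = N ((N ^ k) w) := by rw [pow_succ']; rfl
        rw [hda, ih, hnn, hDaeq, h1 k, add_zero]
    have h3 : ∀ k : ℕ, ∀ v : a, (Da ^ k) v = 0 → v = 0 := by
      intro k
      induction k with
      | zero => intro v hv; simpa using hv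
      | succ k ih =>
        intro v hv
        have : (Da ^ k) (Da v) = 0 := by
          rw [← Module.End.mul_apply, ← pow_succ]
          exact hv
        have := ih _ this
        exact hDabij.injective (by simpa using this)
    have : (Da ^ K) w = 0 := by rw [h2 K, hK]; rfl
    exact h3 K w this
  -- key isotropy: B w w = 0
  have key : B w w = 0 := by
    set M : Module.End ℝ a := N + algebraMap ℝ (Module.End ℝ a) (2 * t) with hM
    have hMapp : ∀ x : a, M x = N x + (2 * t) • x := by
      intro x; simp [hM, Module.algebraMap_end_apply, LinearMap.add_apply, smul_smul, mul_comm]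
    have hcomDasM : Commute Das M := by
      exact hcomDasN.add_right (Algebra.commute_algebraMap_right _ _)
    have h2t : (2 : ℝ) * t ≠ 0 := mul_ne_zero two_ne_zero htne
    have hMunit : IsUnit M := by
      rw [hM]
      exact IsNilpotent.isUnit_add_right_of_commute ⟨K, hK⟩
        ((isUnit_iff_ne_zero.mpr h2t).map (algebraMap ℝ (Module.End ℝ a)))
        (Algebra.commute_algebraMap_right _ _)
    -- single step
    have step : ∀ u v : a, Das u = t • u → Das v = t • v →
        B u (M v) = - B (N u) v := by
      intro u v hu hv
      have h := hDaskew u v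
      rw [hDaeq u, hDaeq v, hu, hv] at h
      simp only [map_add, map_smul, LinearMap.add_apply, LinearMap.smul_apply,
        smul_eq_mul] at h
      rw [hMapp]
      simp only [map_add, map_smul, LinearMap.smul_apply, smul_eq_mul]
      linarith
    -- eigenvector stability under N
    have hNV : ∀ x : a, Das x = t • x → Das (N x) = t • N x := by
      intro x hx
      have hc : Das (N x) = N (Das x) := by
        have := congrArg (fun f : Module.End ℝ a => f x) hcomDasN
        simpa [Module.End.mul_apply] using this
      rw [hc, hx, map_smul]
    -- main induction
    have main : ∀ k : ℕ, ∀ x y : a, Das x = t • x → Das y = t • y →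
        B x ((M ^ k) y) = (-1 : ℝ) ^ k * B ((N ^ k) x) y := by
      intro k
      induction k with
      | zero => intro x y hx hy; simp
      | succ k ih =>
        intro x y hx hy
        have hMk : Das ((M ^ k) y) = t • (M ^ k) y := by
          have hc : Das ((M ^ k) y) = (M ^ k) (Das y) := by
            have := congrArg (fun f : Module.End ℝ a => f y) (hcomDasM.pow_right k)
            simpa [Module.End.mul_apply] using this
          rw [hc, hy, map_smul]
        have h1 : (M ^ (k + 1)) y = M ((M ^ k) y) := by rw [pow_succ']; rfl
        rw [h1, step x _ hx hMk, ih (N x) y (hNV x hx) hy]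
        have h2 : (N ^ k) (N x) = (N ^ (k + 1)) x := by rw [pow_succ]; rfl
        rw [h2]
        ring
    obtain ⟨u, hu⟩ := hMunit
    have hcomDasu : Commute Das (↑u⁻¹ : Module.End ℝ a) :=
      Commute.units_inv_right (by rw [hu]; exact hcomDasM)
    set y0 : a := ((↑u⁻¹ : Module.End ℝ a) ^ K) w with hy0
    have hy0V : Das y0 = t • y0 := by
      have hc : Das y0 = ((↑u⁻¹ : Module.End ℝ a) ^ K) (Das w) := by
        have := congrArg (fun f : Module.End ℝ a => f w) (hcomDasu.pow_right K)
        simpa [Module.End.mul_apply, hy0] using this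
      rw [hc, hDasw, map_smul, hy0]
    have hMy0 : (M ^ K) y0 = w := by
      have : (M ^ K) * ((↑u⁻¹ : Module.End ℝ a) ^ K) = 1 := by
        rw [← hu, ← Units.val_pow_eq_pow_val, ← Units.val_pow_eq_pow_val, ← Units.val_mul]
        simp [inv_pow]
      have := congrArg (fun f : Module.End ℝ a => f w) this
      simpa [Module.End.mul_apply, hy0] using this
    have := main K w y0 hDasw hy0V
    rw [hMy0, hK] at this
    simpa using this
  -- conclusion
  have hwmem : w ∈ {z : a | ∃ x y : l, α x y = z} := ⟨b 0, b 1, rfl⟩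
  have hspan : Submodule.span ℝ {z : a | ∃ x y : l, α x y = z} = Submodule.span ℝ {w} := by
    apply le_antisymm
    · rw [Submodule.span_le]
      rintro z ⟨x, y, rfl⟩
      rw [hrep]
      exact Submodule.smul_mem _ _ (Submodule.mem_span_singleton_self w)
    · rw [Submodule.span_le, Set.singleton_subset_iff]
      exact Submodule.subset_span hwmem
  have hiso : ∀ u ∈ Submodule.span ℝ {z : a | ∃ x y : l, α x y = z},
      ∀ v ∈ Submodule.span ℝ {z : a | ∃ x y : l, α x y = z}, B u v = 0 := by
    intro u hu v hv
    rw [hspan] at hu hv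
    obtain ⟨c, rfl⟩ := Submodule.mem_span_singleton.mp hu
    obtain ⟨d, rfl⟩ := Submodule.mem_span_singleton.mp hv
    simp only [map_smul, LinearMap.smul_apply, smul_eq_mul, key]
    ring
  refine ⟨Or.inr ⟨?_, hiso⟩, fun _ => ⟨w, Submodule.subset_span hwmem, hwne, hiso w (Submodule.subset_span hwmem)⟩⟩
  rw [hspan]
  exact finrank_span_singleton hwne
end
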